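/- Let z ≥ 8 and let α, β : ℕ → {0,1} be two sequences arising from binary strings of length z, each starting with bit 1, with the strings distinct. Consider two agents e and f on the integer line, both started in round 0, whose dancing sources approach each other by 2 every z rounds, starting at distance d ≥ 1, and which move according to the bits of their respective strings within each phase. Then e and f occupy the same node in some round strictly before round ⌈d/2⌉·z; moreover their meeting occurs in the phase when their dancing sources are at distance 1 (if d is odd) or 2 (if d is even). -/

import Mathlib

/-- Number of 1-bits among the first `m` bits of the string `s`. -/
def onesCount (s : ℕ → Bool) (m : ℕ) : ℕ :=
  ((Finset.range m).filter (fun j => s j = true)).card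

/-- Position, in round `n`, of an agent performing `Dance` with string `s` of
length `z`, based at `base`, whose progress direction is to the right: its
dancing source in phase `n / z` is `base + n / z`, and it stands on the far
endpoint of its dancing edge iff the number of 1s processed so far in the
current phase is odd. -/
def dancePosR (base : ℤ) (s : ℕ → Bool) (z n : ℕ) : ℤ :=
  base + ((n / z : ℕ) : ℤ) + (if onesCount s (n % z) % 2 = 1 then 1 else 0)

/-- Same, for an agent whose progress direction is to the left. -/
def dancePosL (base : ℤ) (s : ℕ → Bool) (z n : ℕ) : ℤ :=
  base - ((n / z : ℕ) : ℤ) - (if onesCount s (n % z) % 2 = 1 then 1 else 0)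

lemma onesCount_succ (s : ℕ → Bool) (m : ℕ) :
    onesCount s (m+1) = onesCount s m + (if s m then 1 else 0) := by
  unfold onesCount
  rw [Finset.range_add_one, Finset.filter_insert]
  by_cases h : s m = true
  · simp [h, Finset.card_insert_of_notMem]
  · simp [h]

lemma onesCount_congr (A B : ℕ → Bool) (m : ℕ) (h : ∀ j < m, A j = B j) :
    onesCount A m = onesCount B m := by
  unfold onesCount
  congr 1
  apply Finset.filter_congr
  intro j hj
  simp [h j (Finset.mem_range.mp hj)]

lemma onesCount_one (s : ℕ → Bool) (h : s 0 = true) : onesCount s 1 = 1 := by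
  have := onesCount_succ s 0
  simp only [onesCount, Finset.range_zero, Finset.filter_empty, Finset.card_empty, h] at this
  simpa [onesCount, h] using this


/-- two agents dancing towards each other with distinct binary
strings of length `z`, each starting with bit 1 and containing an odd number of
1s, starting simultaneously at distance `d ≥ 1`, meet strictly before round
`⌈d/2⌉·z`, and the meeting occurs in the phase in which their dancing sources
are at distance 1 (`d` odd) or 2 (`d` even). -/
theorem stmt_7 (z d : ℕ) (hz : 8 ≤ z) (hd : 1 ≤ d)
    (A B : ℕ → Bool) (hA0 : A 0 = true) (hB0 : B 0 = true)
    (hAodd : onesCount A z % 2 = 1) (hBodd : onesCount B z % 2 = 1)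
    (hne : ∃ i < z, A i ≠ B i)
    (e0 f0 : ℤ) (hdist : f0 = e0 + (d : ℤ)) :
    ∃ n, n < ((d + 1) / 2) * z ∧ dancePosR e0 A z n = dancePosL f0 B z n ∧
      n / z = (if d % 2 = 0 then d / 2 - 1 else d / 2) := by
  have h1 : onesCount A 1 = 1 := onesCount_one A hA0
  have h1B : onesCount B 1 = 1 := onesCount_one B hB0
  rcases Nat.even_or_odd d with he | ho
  · -- d even, d = 2(k'+1)
    obtain ⟨k, hk⟩ := he
    obtain ⟨k', rfl⟩ : ∃ k', k = k' + 1 := ⟨k - 1, by omega⟩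
    have heq : k' * z + 1 = 1 + z * k' := by ring
    have hdiv : (k' * z + 1) / z = k' := by
      rw [heq, Nat.add_mul_div_left _ _ (by omega : 0 < z),
        Nat.div_eq_of_lt (by omega : 1 < z)]
      omega
    have hmod : (k' * z + 1) % z = 1 := by
      rw [heq, Nat.add_mul_mod_self_left, Nat.mod_eq_of_lt (by omega : 1 < z)]
    refine ⟨k' * z + 1, ?_, ?_, ?_⟩
    · have : (d + 1) / 2 = k' + 1 := by omega
      rw [this]
      have : (k' + 1) * z = k' * z + z := by ring
      omega
    · unfold dancePosR dancePosL
      rw [hdiv, hmod, h1, h1B, hdist]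
      simp
      push_cast
      omega
    · rw [hdiv]
      have h2 : d % 2 = 0 := by omega
      have h3 : d / 2 = k' + 1 := by omega
      simp [h2, h3]
  · -- d odd, d = 2k+1
    obtain ⟨k, hk⟩ := ho
    have hex : ∃ i, A i ≠ B i := by obtain ⟨i, _, hi⟩ := hne; exact ⟨i, hi⟩
    set i0 := Nat.find hex with hi0
    have hdiff : A i0 ≠ B i0 := Nat.find_spec hex
    have hlt : ∀ j < i0, A j = B j := fun j hj => by
      have := Nat.find_min hex hj; simpa using this
    have hi0z : i0 < z := by
      obtain ⟨i, hi, hne'⟩ := hne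
      exact lt_of_le_of_lt (Nat.find_min' hex hne') hi
    have hcongr : onesCount A i0 = onesCount B i0 := onesCount_congr A B i0 hlt
    -- show i0 + 1 < z
    have hi0z1 : i0 + 1 < z := by
      by_contra hcon
      have hzeq : z = i0 + 1 := by omega
      rw [hzeq, onesCount_succ] at hAodd hBodd
      rw [hcongr] at hAodd
      cases hA : A i0 <;> cases hB : B i0 <;>
        simp [hA, hB] at hAodd hBodd hdiff <;> omega
    set m := i0 + 1 with hm
    have hAm : onesCount A m = onesCount A i0 + (if A i0 then 1 else 0) :=
      onesCount_succ A i0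
    have hBm : onesCount B m = onesCount B i0 + (if B i0 then 1 else 0) :=
      onesCount_succ B i0
    have heq : k * z + m = m + z * k := by ring
    have hdiv : (k * z + m) / z = k := by
      rw [heq, Nat.add_mul_div_left _ _ (by omega : 0 < z),
        Nat.div_eq_of_lt (by omega : m < z)]
      omega
    have hmod : (k * z + m) % z = m := by
      rw [heq, Nat.add_mul_mod_self_left, Nat.mod_eq_of_lt (by omega : m < z)]
    refine ⟨k * z + m, ?_, ?_, ?_⟩
    · have h2 : (d + 1) / 2 = k + 1 := by omega
      rw [h2]
      have : (k + 1) * z = k * z + z := by ring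
      omega
    · unfold dancePosR dancePosL
      rw [hdiv, hmod, hAm, hBm, ← hcongr, hdist]
      cases hA : A i0 <;> cases hB : B i0 <;>
        simp only [hA, hB, Bool.false_eq_true, if_true, if_false, add_zero, ne_eq,
          not_true_eq_false, not_false_eq_true] at hdiff ⊢ <;>
        split_ifs <;> push_cast <;> omega
    · have h2 : ¬ d % 2 = 0 := by omega
      have h3 : d / 2 = k := by omega
      rw [hdiv]
      simp [h2, h3]
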